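/- For all integers n ≥ 0 and d ≥ 1, the operator D_{S_d} = Σ_{k=0}^{d-1} C(d-1,k) · (1/(k+1)!) · x^k · D^{k+1} applied to the monomial x^n gives ⟨n⟩_d · x^{n-1}, where D is the usual derivative and ⟨n⟩_d = binomial(n+d-1, d). -/

import Mathlib

open Polynomial

/-- The n-th simplicial d-polytopic number ⟨n⟩_d = C(n+d-1, d). -/
def sp (d n : ℕ) : ℕ := Nat.choose (n + d - 1) d

/-- The simplicial d-polytopic derivative D_{S_d} on polynomials:
D_{S_d} p = Σ_{k=0}^{d-1} C(d-1,k)·(1/(k+1)!)·x^k·p^{(k+1)}. -/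
noncomputable def DSd (d : ℕ) (p : ℚ[X]) : ℚ[X] :=
  ∑ k ∈ Finset.range d,
    C ((Nat.choose (d - 1) k : ℚ) / (Nat.factorial (k + 1) : ℚ)) * X ^ k *
      (Polynomial.derivative^[k + 1] p)

lemma vandermonde_aux (e n : ℕ) :
    ∑ k ∈ Finset.range (e + 1), (e.choose k) * (n.choose (k + 1)) = (n + e).choose (e + 1) := by
  rw [Nat.add_choose_eq, Finset.Nat.sum_antidiagonal_eq_sum_range_succ_mk]
  rw [show (e + 1).succ = (e + 1) + 1 from rfl]
  conv_rhs => rw [Finset.sum_range_succ']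
  simp only [Nat.choose_zero_right, Nat.add_sub_cancel_left, Nat.sub_zero,
    Nat.choose_succ_self, mul_zero, one_mul, add_zero]
  apply Finset.sum_congr rfl
  intro k hk
  rw [Finset.mem_range] at hk
  rw [show e + 1 - (k + 1) = e - k by omega, Nat.choose_symm (by omega : k ≤ e)]
  ring

lemma CX_aux (a b : ℚ) (k m : ℕ) :
    C a * X ^ k * (C b * X ^ m) = C (a * b) * X ^ (k + m) := by
  rw [C_mul, pow_add]; ring

theorem DSd_monomial (d n : ℕ) (hd : 1 ≤ d) :
    DSd d (X ^ n) = C (sp d n : ℚ) * X ^ (n - 1) := by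
  obtain ⟨e, rfl⟩ : ∃ e, d = e + 1 := ⟨d - 1, by omega⟩
  have key : ∀ k ∈ Finset.range (e + 1),
      C ((Nat.choose (e + 1 - 1) k : ℚ) / (Nat.factorial (k + 1) : ℚ)) * X ^ k *
        ((Polynomial.derivative)^[k + 1] (X ^ n))
      = C ((e.choose k * n.choose (k + 1) : ℕ) : ℚ) * X ^ (n - 1) := by
    intro k _
    rw [Polynomial.iterate_derivative_X_pow_eq_smul]
    simp only [Nat.add_sub_cancel]
    rcases le_or_gt (k + 1) n with h | h
    · rw [Polynomial.smul_eq_C_mul, CX_aux,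
        show k + (n - (k + 1)) = n - 1 by omega]
      rw [Nat.descFactorial_eq_factorial_mul_choose]
      have hf : ((k + 1).factorial : ℚ) ≠ 0 := by positivity
      have harg : (↑(e.choose k) / ↑(k + 1).factorial) *
          ((((k + 1).factorial * n.choose (k + 1) : ℕ)) : ℚ)
          = ((e.choose k * n.choose (k + 1) : ℕ) : ℚ) := by
        push_cast
        field_simp
      rw [harg]
    · have h1 : n.descFactorial (k + 1) = 0 := Nat.descFactorial_eq_zero_iff_lt.mpr h
      have h2 : n.choose (k + 1) = 0 := Nat.choose_eq_zero_of_lt h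
      simp [h1, h2]
      omega
  rw [DSd, Finset.sum_congr rfl key, ← Finset.sum_mul, ← map_sum]
  congr 2
  norm_cast
  rw [vandermonde_aux e n]
  simp [sp]
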